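/- arXiv:2006.14512 — 3 statements merged into one kernel-verified Lean document; each statement's English description precedes it below -/
import Mathlib

section
/- Let h : R^n -> R^k be differentiable with h(x0) = 0 for some fixed x0, and assume its transposed Jacobian is beta-smooth in the H-norm: ||nabla h(x1)^T - nabla h(x2)^T||_H <= beta ||x1 - x2||_2 for all x1, x2. Then for every x and every tau > 0, there exists x' with ||x - x'||_2 <= tau such that ||h(x)||_H^2 <= 2( ||nabla h(x')^T||_H^2 + beta^2 ((||x - x0||_2 - tau)_+)^2 ) * ||x - x0||_2^2, where (t)_+ = max(t, 0). -/
open Matrix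

namespace Stmt11Aux

noncomputable def toE {m : ℕ} (v : Fin m → ℝ) : EuclideanSpace ℝ (Fin m) :=
  (WithLp.equiv 2 (Fin m → ℝ)).symm v

lemma norm_toE {m : ℕ} (v : Fin m → ℝ) : ‖toE v‖ = Real.sqrt (v ⬝ᵥ v) := by
  rw [EuclideanSpace.norm_eq]
  congr 1
  simp [toE, dotProduct, Real.norm_eq_abs, sq_abs, sq]

lemma dot_self_nonneg {m : ℕ} (v : Fin m → ℝ) : 0 ≤ v ⬝ᵥ v :=
  Finset.sum_nonneg fun _ _ => mul_self_nonneg _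

noncomputable def F2 {k n : ℕ} (M : Matrix (Fin k) (Fin n) ℝ) : ℝ := ∑ i, ∑ j, (M i j) ^ 2

lemma F2_nonneg {k n : ℕ} (M : Matrix (Fin k) (Fin n) ℝ) : 0 ≤ F2 M :=
  Finset.sum_nonneg fun _ _ => Finset.sum_nonneg fun _ _ => sq_nonneg _

noncomputable def fn {k n : ℕ} (M : Matrix (Fin k) (Fin n) ℝ) : ℝ := Real.sqrt (F2 M)

lemma fn_nonneg {k n : ℕ} (M : Matrix (Fin k) (Fin n) ℝ) : 0 ≤ fn M := Real.sqrt_nonneg _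

noncomputable def mE {k n : ℕ} (M : Matrix (Fin k) (Fin n) ℝ) :
    EuclideanSpace ℝ (Fin k × Fin n) :=
  (WithLp.equiv 2 (Fin k × Fin n → ℝ)).symm fun p => M p.1 p.2

lemma fn_eq_norm {k n : ℕ} (M : Matrix (Fin k) (Fin n) ℝ) : fn M = ‖mE M‖ := by
  rw [EuclideanSpace.norm_eq, fn, F2]
  congr 1
  rw [Fintype.sum_prod_type]
  simp [mE, Real.norm_eq_abs, sq_abs]

lemma fn_triangle {k n : ℕ} (M N : Matrix (Fin k) (Fin n) ℝ) :
    fn M ≤ fn (M - N) + fn N := by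
  rw [fn_eq_norm, fn_eq_norm, fn_eq_norm]
  have : mE M = mE (M - N) + mE N := by
    ext p; simp [mE, Matrix.sub_apply]
  rw [this]
  exact norm_add_le _ _

lemma mulVec_dot_le {k n : ℕ} (M : Matrix (Fin k) (Fin n) ℝ) (v : Fin n → ℝ) :
    (M *ᵥ v) ⬝ᵥ (M *ᵥ v) ≤ F2 M * (v ⬝ᵥ v) := by
  have h1 : (M *ᵥ v) ⬝ᵥ (M *ᵥ v) = ∑ i, (∑ j, M i j * v j) ^ 2 := by
    simp [dotProduct, Matrix.mulVec, sq]
  rw [h1, F2, Finset.sum_mul]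
  refine Finset.sum_le_sum fun i _ => ?_
  have := Finset.sum_mul_sq_le_sq_mul_sq Finset.univ (fun j => M i j) v
  calc (∑ j, M i j * v j) ^ 2 ≤ (∑ j, (M i j) ^ 2) * (∑ j, (v j) ^ 2) := this
    _ = (∑ j, (M i j) ^ 2) * (v ⬝ᵥ v) := by
        rw [show v ⬝ᵥ v = ∑ j, (v j) ^ 2 by simp [dotProduct, sq]]

lemma trace_BM {k n : ℕ} (B : Matrix (Fin k) (Fin k) ℝ) (M : Matrix (Fin k) (Fin n) ℝ) :
    (Mᵀ * (Bᵀ * B) * M).trace = F2 (B * M) := by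
  have h1 : Mᵀ * (Bᵀ * B) * M = (B * M)ᵀ * (B * M) := by
    rw [Matrix.transpose_mul]
    rw [Matrix.mul_assoc, Matrix.mul_assoc, Matrix.mul_assoc]
  rw [h1, Matrix.trace, F2]
  rw [Finset.sum_comm]
  refine Finset.sum_congr rfl fun j _ => ?_
  simp only [Matrix.diag]
  rw [Matrix.mul_apply]
  refine Finset.sum_congr rfl fun i _ => ?_
  rw [Matrix.transpose_apply, sq]

lemma dot_BtB {k : ℕ} (B : Matrix (Fin k) (Fin k) ℝ) (v : Fin k → ℝ) :
    v ⬝ᵥ (Bᵀ * B) *ᵥ v = (B *ᵥ v) ⬝ᵥ (B *ᵥ v) := by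
  rw [← Matrix.mulVec_mulVec, Matrix.dotProduct_mulVec, Matrix.vecMul_transpose]

end Stmt11Aux

open Stmt11Aux

/-- Pointwise bound (appendix lemma for Theorem 2): if h(x0) = 0 and the transposed
Jacobian is β-smooth in the H-norm, then for every x and τ > 0 there is x' with
‖x - x'‖₂ ≤ τ and
‖h(x)‖_H² ≤ 2(‖∇h(x')ᵀ‖_H² + β²((‖x-x0‖₂ - τ)₊)²)·‖x-x0‖₂². -/
theorem stmt11 {n k : ℕ}
    (H : Matrix (Fin k) (Fin k) ℝ) (hH : H.PosSemidef)
    (h : (Fin n → ℝ) → (Fin k → ℝ))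
    (Dh : (Fin n → ℝ) → Matrix (Fin k) (Fin n) ℝ)
    (hdiff : ∀ x, HasFDerivAt h (LinearMap.toContinuousLinearMap ((Dh x).mulVecLin)) x)
    (β : ℝ)
    (hsmooth : ∀ x1 x2 : Fin n → ℝ,
      Real.sqrt (((Dh x1 - Dh x2)ᵀ * H * (Dh x1 - Dh x2)).trace) ≤
        β * Real.sqrt ((x1 - x2) ⬝ᵥ (x1 - x2)))
    (x0 : Fin n → ℝ) (hx0 : h x0 = 0)
    (x : Fin n → ℝ) (τ : ℝ) (hτ : 0 < τ) :
    ∃ x' : Fin n → ℝ, Real.sqrt ((x - x') ⬝ᵥ (x - x')) ≤ τ ∧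
      h x ⬝ᵥ H.mulVec (h x) ≤
        2 * (((Dh x')ᵀ * H * Dh x').trace +
            β ^ 2 * (max (Real.sqrt ((x - x0) ⬝ᵥ (x - x0)) - τ) 0) ^ 2) *
          ((x - x0) ⬝ᵥ (x - x0)) := by
  classical
  obtain ⟨B, hB⟩ : ∃ B : Matrix (Fin k) (Fin k) ℝ, H = Bᴴ * B := by
    open scoped MatrixOrder in exact CStarAlgebra.nonneg_iff_eq_star_mul_self.mp hH.nonneg
  have hBt : H = Bᵀ * B := by
    rw [hB, Matrix.conjTranspose_eq_transpose_of_trivial]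
  subst hBt
  by_cases hxx : x = x0
  · refine ⟨x, ?_, ?_⟩
    · simp only [sub_self, zero_dotProduct, Real.sqrt_zero]
      exact le_of_lt hτ
    · have h0 : h x = 0 := by rw [hxx, hx0]
      rw [h0, hxx]
      simp
  -- main case
  set r2 := (x - x0) ⬝ᵥ (x - x0) with hr2def
  have hr2nn : 0 ≤ r2 := dot_self_nonneg (x - x0)
  have hr2pos : 0 < r2 := by
    rcases lt_or_eq_of_le hr2nn with hlt | heq
    · exact hlt
    · exact absurd (sub_eq_zero.mp (dotProduct_self_eq_zero.mp heq.symm)) hxx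
  set r := Real.sqrt r2 with hrdef
  have hrpos : 0 < r := Real.sqrt_pos.mpr hr2pos
  have hsm : ∀ x1 x2 : Fin n → ℝ, fn (B * Dh x1 - B * Dh x2) ≤
      β * Real.sqrt ((x1 - x2) ⬝ᵥ (x1 - x2)) := by
    intro x1 x2
    have hh := hsmooth x1 x2
    rwa [trace_BM, Matrix.mul_sub, ← fn] at hh
  have hβ : 0 ≤ β := by
    have h1 := (fn_nonneg _).trans (hsm x x0)
    nlinarith [h1, hrpos]
  set y : ℝ → (Fin n → ℝ) := fun t => x0 + t • (x - x0) with hy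
  set φ : ℝ → ℝ := fun t => fn (B * Dh (y t)) with hφ
  have hphi_nonneg : ∀ t, 0 ≤ φ t := fun t => fn_nonneg _
  have hscale : ∀ c : ℝ, Real.sqrt ((c • (x - x0)) ⬝ᵥ (c • (x - x0))) = |c| * r := by
    intro c
    rw [smul_dotProduct, dotProduct_smul, smul_eq_mul, smul_eq_mul,
      show c * (c * r2) = c ^ 2 * r2 by ring, Real.sqrt_mul (sq_nonneg c),
      Real.sqrt_sq_eq_abs]
  have hyd : ∀ s t : ℝ, y s - y t = (s - t) • (x - x0) := by
    intro s t
    ext i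
    simp [hy, sub_smul]
    ring
  have hdist : ∀ s t : ℝ, Real.sqrt ((y s - y t) ⬝ᵥ (y s - y t)) = |s - t| * r := by
    intro s t
    rw [hyd s t, hscale]
  have hlip : ∀ s t : ℝ, φ s ≤ φ t + β * r * |s - t| := by
    intro s t
    have h1 := fn_triangle (B * Dh (y s)) (B * Dh (y t))
    have h2 := hsm (y s) (y t)
    rw [hdist s t] at h2
    calc φ s ≤ fn (B * Dh (y s) - B * Dh (y t)) + φ t := h1
      _ ≤ β * (|s - t| * r) + φ t := by exact add_le_add_left h2 _
      _ = φ t + β * r * |s - t| := by ring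
  have hcont : Continuous φ := by
    have hlw : LipschitzWith ⟨β * r, by positivity⟩ φ := by
      refine LipschitzWith.of_dist_le_mul fun a b => ?_
      rw [Real.dist_eq, Real.dist_eq]
      show |φ a - φ b| ≤ β * r * |a - b|
      rw [abs_sub_le_iff]
      constructor
      · have := hlip a b
        nlinarith [this]
      · have := hlip b a
        rw [abs_sub_comm] at this
        nlinarith [this]
    exact hlw.continuous
  set t0 : ℝ := max (1 - τ / r) 0 with ht0def
  have ht00 : 0 ≤ t0 := le_max_right _ _
  have ht01 : t0 ≤ 1 := by
    apply max_le _ zero_le_one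
    have : 0 ≤ τ / r := le_of_lt (div_pos hτ hrpos)
    linarith
  obtain ⟨t2, ht2mem, ht2max⟩ :=
    isCompact_Icc.exists_isMaxOn (Set.nonempty_Icc.mpr ht01) hcont.continuousOn
  obtain ⟨ht2l, ht2r⟩ := ht2mem
  refine ⟨y t2, ?_, ?_⟩
  · -- distance bound
    have hxy : x - y t2 = (1 - t2) • (x - x0) := by
      ext i; simp [hy, sub_smul]; ring
    rw [hxy, hscale, abs_of_nonneg (by linarith : (0:ℝ) ≤ 1 - t2)]
    have h1 : 1 - t0 ≤ τ / r := by
      have := le_max_left (1 - τ / r) (0:ℝ)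
      rw [← ht0def] at this
      linarith
    calc (1 - t2) * r ≤ (1 - t0) * r := by
          apply mul_le_mul_of_nonneg_right _ (le_of_lt hrpos)
          linarith
      _ ≤ (τ / r) * r := mul_le_mul_of_nonneg_right h1 (le_of_lt hrpos)
      _ = τ := div_mul_cancel₀ τ (ne_of_gt hrpos)
  -- main bound
  set A := φ t2 with hAdef
  have hAnn : 0 ≤ A := hphi_nonneg t2
  set m := max (r - τ) 0 with hmdef
  have hmnn : 0 ≤ m := le_max_right _ _
  have hrt0 : r * t0 = m := by
    rw [ht0def, hmdef, mul_max_of_nonneg _ _ (le_of_lt hrpos), mul_sub, mul_one,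
      mul_div_cancel₀ _ (ne_of_gt hrpos), mul_zero]
  have key : ∀ t ∈ Set.Icc (0:ℝ) 1, φ t ≤ A + β * m := by
    intro t ht
    rcases le_or_gt t0 t with hc | hc
    · have h1 : φ t ≤ A := ht2max ⟨hc, ht.2⟩
      nlinarith [mul_nonneg hβ hmnn]
    · have h1 := hlip t t0
      have h2 : φ t0 ≤ A := ht2max ⟨le_refl t0, ht01⟩
      have h3 : |t - t0| ≤ t0 := by
        rw [abs_of_nonpos (by linarith)]
        linarith [ht.1]
      have h4 : φ t ≤ A + β * r * t0 := by
        nlinarith [mul_nonneg hβ (le_of_lt hrpos)]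
      calc φ t ≤ A + β * r * t0 := h4
        _ = A + β * m := by rw [mul_assoc, hrt0]
  -- MVT setup
  set eN := PiLp.continuousLinearEquiv 2 ℝ (fun _ : Fin n => ℝ) with heN
  set eK := PiLp.continuousLinearEquiv 2 ℝ (fun _ : Fin k => ℝ) with heK
  set G : EuclideanSpace ℝ (Fin n) → EuclideanSpace ℝ (Fin k) :=
    fun v => toE (B *ᵥ h (eN v)) with hG
  set f' : EuclideanSpace ℝ (Fin n) → (EuclideanSpace ℝ (Fin n) →L[ℝ] EuclideanSpace ℝ (Fin k)) :=
    fun v => ((eK.symm.toContinuousLinearMap).comp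
      ((LinearMap.toContinuousLinearMap (B * Dh (eN v)).mulVecLin).comp
        eN.toContinuousLinearMap)) with hf'
  have hfd : ∀ v, HasFDerivAt G (f' v) v := by
    intro v
    have h1 : HasFDerivAt (fun w : EuclideanSpace ℝ (Fin n) => h (eN w))
        ((LinearMap.toContinuousLinearMap (Dh (eN v)).mulVecLin).comp
          eN.toContinuousLinearMap) v :=
      (hdiff (eN v)).comp v eN.hasFDerivAt
    have h2 := ((LinearMap.toContinuousLinearMap (Matrix.mulVecLin B)).hasFDerivAt).comp v h1
    have h3 := ((eK.symm.toContinuousLinearMap).hasFDerivAt).comp v h2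
    have heq : f' v = (eK.symm.toContinuousLinearMap).comp
        (((LinearMap.toContinuousLinearMap (Matrix.mulVecLin B))).comp
          ((LinearMap.toContinuousLinearMap (Dh (eN v)).mulVecLin).comp
            eN.toContinuousLinearMap)) := by
      refine ContinuousLinearMap.ext fun w => ?_
      simp only [hf', ContinuousLinearMap.comp_apply, ContinuousLinearEquiv.coe_coe,
        LinearMap.coe_toContinuousLinearMap', Matrix.mulVecLin_apply, Matrix.mulVec_mulVec]
    rw [heq]
    exact h3
  have hop : ∀ v, ‖f' v‖ ≤ fn (B * Dh (eN v)) := by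
    intro v
    refine ContinuousLinearMap.opNorm_le_bound _ (fn_nonneg _) fun w => ?_
    have h1 : (f' v) w = toE ((B * Dh (eN v)) *ᵥ (eN w)) := by
      simp only [hf', ContinuousLinearMap.comp_apply, ContinuousLinearEquiv.coe_coe,
        LinearMap.coe_toContinuousLinearMap', Matrix.mulVecLin_apply, toE, heK,
        PiLp.continuousLinearEquiv_symm_apply]
      rfl
    have h3 : ‖w‖ = Real.sqrt ((eN w) ⬝ᵥ (eN w)) := norm_toE (eN w)
    rw [h1, norm_toE, h3, fn, ← Real.sqrt_mul (F2_nonneg _)]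
    exact Real.sqrt_le_sqrt (mulVec_dot_le _ _)
  have hbound : ∀ v ∈ segment ℝ (toE x0) (toE x), ‖f' v‖ ≤ A + β * m := by
    intro v hv
    rw [segment_eq_image'] at hv
    obtain ⟨θ, hθ, rfl⟩ := hv
    have hEv : eN (toE x0 + θ • (toE x - toE x0)) = y θ := rfl
    calc ‖f' _‖ ≤ fn (B * Dh (eN (toE x0 + θ • (toE x - toE x0)))) := hop _
      _ = φ θ := by rw [hEv]
      _ ≤ A + β * m := key θ hθ
  have hmvt := (convex_segment (toE x0) (toE x)).norm_image_sub_le_of_norm_hasFDerivWithin_le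
    (f' := f') (fun v _ => (hfd v).hasFDerivWithinAt) hbound
    (left_mem_segment ℝ _ _) (right_mem_segment ℝ _ _)
  have hGx0 : G (toE x0) = 0 := by
    have : eN (toE x0) = x0 := rfl
    rw [hG]
    simp only [this, hx0, Matrix.mulVec_zero]
    rfl
  have hnx : ‖toE x - toE x0‖ = r := by
    rw [show toE x - toE x0 = toE (x - x0) from rfl, norm_toE]
  rw [hGx0, sub_zero, hnx] at hmvt
  have hGx : ‖G (toE x)‖ = Real.sqrt ((B *ᵥ h x) ⬝ᵥ (B *ᵥ h x)) := by
    show ‖toE (B *ᵥ h (eN (toE x)))‖ = _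
    rw [show eN (toE x) = x from rfl]
    exact norm_toE _
  rw [hGx] at hmvt
  -- conclude
  have hdnn : 0 ≤ (B *ᵥ h x) ⬝ᵥ (B *ᵥ h x) := dot_self_nonneg _
  have hL : (B *ᵥ h x) ⬝ᵥ (B *ᵥ h x) ≤ ((A + β * m) * r) ^ 2 := by
    calc (B *ᵥ h x) ⬝ᵥ (B *ᵥ h x)
        = (Real.sqrt ((B *ᵥ h x) ⬝ᵥ (B *ᵥ h x))) ^ 2 := (Real.sq_sqrt hdnn).symm
      _ ≤ ((A + β * m) * r) ^ 2 := pow_le_pow_left₀ (Real.sqrt_nonneg _) hmvt 2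
  have htr : ((Dh (y t2))ᵀ * (Bᵀ * B) * Dh (y t2)).trace = A ^ 2 := by
    rw [trace_BM]
    rw [hAdef, hφ]
    exact (Real.sq_sqrt (F2_nonneg _)).symm
  rw [Stmt11Aux.dot_BtB, htr]
  have hr2eq : r ^ 2 = r2 := Real.sq_sqrt hr2nn
  clear_value A m r r2
  have hexp : 2 * (A ^ 2 + β ^ 2 * m ^ 2) - (A + β * m) ^ 2 = (A - β * m) ^ 2 := by
    ring
  have hstep : (A + β * m) ^ 2 ≤ 2 * (A ^ 2 + β ^ 2 * m ^ 2) := by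
    linarith [sq_nonneg (A - β * m), hexp]
  calc (B *ᵥ h x) ⬝ᵥ (B *ᵥ h x) ≤ ((A + β * m) * r) ^ 2 := hL
    _ = (A + β * m) ^ 2 * r2 := by rw [mul_pow, hr2eq]
    _ ≤ 2 * (A ^ 2 + β ^ 2 * m ^ 2) * r2 := mul_le_mul_of_nonneg_right hstep hr2nn
end

section
/- Let h : R^n -> R^k be differentiable with beta-smooth transposed Jacobian in H-norm: ||nabla h(x1)^T - nabla h(x2)^T||_H <= beta||x1-x2||_2. Then for every x and every tau > 0, there exist points x'_1,...,x'_n with ||x - x'_i||_2 <= tau such that tau^2 * ||nabla h(x)^T||_H^2 <= 3( sum_{i=1}^n ||h(x'_i)||_H^2 + n ||h(x)||_H^2 + n tau^4 beta^2 ). -/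
open Matrix

lemma aux_sqrt_dot {k : ℕ} (H S : Matrix (Fin k) (Fin k) ℝ) (hs : S * S = H)
    (hvm : ∀ w : Fin k → ℝ, w ᵥ* S = S *ᵥ w) (v : Fin k → ℝ) :
    (S *ᵥ v) ⬝ᵥ (S *ᵥ v) = v ⬝ᵥ H *ᵥ v := by
  subst hs
  rw [← mulVec_mulVec, dotProduct_mulVec, hvm, dotProduct_comm]

lemma aux_cs {k m : ℕ} (A : Matrix (Fin k) (Fin m) ℝ) (v : Fin m → ℝ) :
    (A *ᵥ v) ⬝ᵥ (A *ᵥ v) ≤ (Aᵀ * A).trace * (v ⬝ᵥ v) := by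
  have h1 : (A *ᵥ v) ⬝ᵥ (A *ᵥ v) = ∑ i, (∑ j, A i j * v j) ^ 2 := by
    simp [dotProduct, mulVec, sq]
  have h2 : (Aᵀ * A).trace = ∑ j, ∑ i, A i j ^ 2 := by
    simp [Matrix.trace, Matrix.diag, Matrix.mul_apply, sq]
  rw [h1, h2, Finset.sum_comm (s := Finset.univ) (t := Finset.univ), Finset.sum_mul]
  refine Finset.sum_le_sum fun i _ => ?_
  have := Finset.sum_mul_sq_le_sq_mul_sq Finset.univ (fun j => A i j) v
  simpa [dotProduct, sq] using this

lemma aux_trace_cols {k n : ℕ} (H : Matrix (Fin k) (Fin k) ℝ) (M : Matrix (Fin k) (Fin n) ℝ) :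
    (Mᵀ * H * M).trace = ∑ j, (M *ᵥ Pi.single j 1) ⬝ᵥ H *ᵥ (M *ᵥ Pi.single j 1) := by
  simp only [mulVec_single, mul_one]
  simp only [Matrix.trace, Matrix.diag, Matrix.mul_apply, Matrix.mulVec, dotProduct,
    transpose_apply, Finset.sum_mul, Finset.mul_sum]
  refine Finset.sum_congr rfl fun j _ => ?_
  rw [Finset.sum_comm]
  simp [mul_assoc]

set_option maxHeartbeats 1000000 in
/-- Converse pointwise bound (appendix lemma for Theorem 2): under β-smoothness of
the transposed Jacobian in the H-norm, for every x and τ > 0 there are points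
x'_1, …, x'_n with ‖x - x'_i‖₂ ≤ τ and
τ²‖∇h(x)ᵀ‖_H² ≤ 3(∑_i ‖h(x'_i)‖_H² + n‖h(x)‖_H² + n τ⁴ β²). -/
theorem stmt12 {n k : ℕ}
    (H : Matrix (Fin k) (Fin k) ℝ) (hH : H.PosSemidef)
    (h : (Fin n → ℝ) → (Fin k → ℝ))
    (Dh : (Fin n → ℝ) → Matrix (Fin k) (Fin n) ℝ)
    (hdiff : ∀ x, HasFDerivAt h (LinearMap.toContinuousLinearMap ((Dh x).mulVecLin)) x)
    (β : ℝ)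
    (hsmooth : ∀ x1 x2 : Fin n → ℝ,
      Real.sqrt (((Dh x1 - Dh x2)ᵀ * H * (Dh x1 - Dh x2)).trace) ≤
        β * Real.sqrt ((x1 - x2) ⬝ᵥ (x1 - x2)))
    (x : Fin n → ℝ) (τ : ℝ) (hτ : 0 < τ) :
    ∃ x' : Fin n → (Fin n → ℝ),
      (∀ i, Real.sqrt ((x - x' i) ⬝ᵥ (x - x' i)) ≤ τ) ∧
      τ ^ 2 * ((Dh x)ᵀ * H * Dh x).trace ≤
        3 * ((∑ i, h (x' i) ⬝ᵥ H.mulVec (h (x' i))) +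
          n * (h x ⬝ᵥ H.mulVec (h x)) + n * τ ^ 4 * β ^ 2) := by
  classical
  open scoped MatrixOrder Matrix.Norms.L2Operator in
  set S := CFC.sqrt H with hSdef
  have hs : S * S = H := by
    open scoped MatrixOrder Matrix.Norms.L2Operator in
    exact CFC.sqrt_mul_sqrt_self H hH.nonneg
  have ht : Sᵀ = S := by
    have h1 := (open scoped MatrixOrder Matrix.Norms.L2Operator in (nonneg_iff_posSemidef.1 (CFC.sqrt_nonneg H))).1
    rwa [Matrix.IsHermitian, conjTranspose_eq_transpose_of_trivial] at h1
  have hvm : ∀ w : Fin k → ℝ, w ᵥ* S = S *ᵥ w := by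
    intro w; rw [← ht, vecMul_transpose, ht]
  -- the H-quadratic form is nonneg
  have hq0 : ∀ v : Fin k → ℝ, 0 ≤ v ⬝ᵥ H *ᵥ v := by
    intro v
    have := hH.dotProduct_mulVec_nonneg v
    simpa using this
  -- unit vectors
  set u : Fin n → (Fin n → ℝ) := fun i => Pi.single i 1 with hu
  have huu : ∀ i, u i ⬝ᵥ u i = 1 := by
    intro i
    simp [hu, dotProduct, Pi.single_apply]
  -- the L map into Euclidean space
  set L : (Fin k → ℝ) →L[ℝ] EuclideanSpace ℝ (Fin k) :=
    ((PiLp.continuousLinearEquiv 2 ℝ (fun _ : Fin k => ℝ)).symm.toContinuousLinearMap).comp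
      (LinearMap.toContinuousLinearMap S.mulVecLin) with hLdef
  have hLapp : ∀ v, L v = (WithLp.equiv 2 (Fin k → ℝ)).symm (S *ᵥ v) := fun v => rfl
  have hLnorm : ∀ v : Fin k → ℝ, ‖L v‖ ^ 2 = v ⬝ᵥ H *ᵥ v := by
    intro v
    have h1 : ‖L v‖ ^ 2 = (S *ᵥ v) ⬝ᵥ (S *ᵥ v) := by
      rw [hLapp, EuclideanSpace.norm_eq, Real.sq_sqrt (by positivity)]
      simp [dotProduct, PiLp.toLp_apply, Real.norm_eq_abs, sq_abs, sq]
    rw [h1, aux_sqrt_dot H S hs hvm v]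
  -- nonnegativity of β
  have hβ : n = 0 ∨ 0 ≤ β := by
    rcases Nat.eq_zero_or_pos n with h0 | h0
    · exact Or.inl h0
    · right
      have i0 : Fin n := ⟨0, h0⟩
      have := hsmooth (x + u i0) x
      have h2 : (x + u i0 - x) ⬝ᵥ (x + u i0 - x) = 1 := by
        simpa [add_sub_cancel_left] using huu i0
      rw [h2, Real.sqrt_one, mul_one] at this
      exact le_trans (Real.sqrt_nonneg _) this
  -- per-coordinate estimate
  have key : ∀ i : Fin n,
      τ ^ 2 * (((Dh x) *ᵥ u i) ⬝ᵥ H *ᵥ ((Dh x) *ᵥ u i)) ≤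
        3 * (h (x + τ • u i) ⬝ᵥ H *ᵥ (h (x + τ • u i)) + h x ⬝ᵥ H *ᵥ (h x) + τ ^ 4 * β ^ 2) := by
    intro i
    have hβ' : 0 ≤ β := hβ.resolve_left fun h0 => ((h0 ▸ i : Fin 0)).elim0
    set d : Fin k → ℝ := (Dh x) *ᵥ u i with hd
    set g : ℝ → EuclideanSpace ℝ (Fin k) := fun t => L (h (x + t • u i)) - t • L d with hg
    set g' : ℝ → EuclideanSpace ℝ (Fin k) :=
      fun t => L ((Dh (x + t • u i)) *ᵥ u i) - L d with hg'
    have hderiv : ∀ t : ℝ, HasDerivAt g (g' t) t := by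
      intro t
      have hc : HasDerivAt (fun t : ℝ => x + t • u i) (u i) t := by
        simpa using ((hasDerivAt_id t).smul_const (u i)).const_add x
      have hh1 : HasDerivAt (fun t : ℝ => h (x + t • u i)) ((Dh (x + t • u i)) *ᵥ u i) t := by
        exact (hdiff (x + t • u i)).comp_hasDerivAt t hc
      have hh2 : HasDerivAt (fun t : ℝ => L (h (x + t • u i)))
          (L ((Dh (x + t • u i)) *ᵥ u i)) t := L.hasFDerivAt.comp_hasDerivAt t hh1
      have hh3 : HasDerivAt (fun t : ℝ => t • L d) (L d) t := by
        simpa using (hasDerivAt_id t).smul_const (L d)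
      exact hh2.sub hh3
    have hbound : ∀ t ∈ Set.Ico (0 : ℝ) τ, ‖g' t‖ ≤ β * τ := by
      intro t htI
      have hA : g' t = L ((Dh (x + t • u i) - Dh x) *ᵥ u i) := by
        rw [hg', sub_mulVec, map_sub]
      set A : Matrix (Fin k) (Fin n) ℝ := Dh (x + t • u i) - Dh x with hAdef
      have h1 : ‖g' t‖ ^ 2 = (A *ᵥ u i) ⬝ᵥ H *ᵥ (A *ᵥ u i) := by
        rw [hA, hLnorm]
      have h2 : (A *ᵥ u i) ⬝ᵥ H *ᵥ (A *ᵥ u i) ≤ (Aᵀ * H * A).trace := by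
        have e1 : (A *ᵥ u i) ⬝ᵥ H *ᵥ (A *ᵥ u i) = ((S * A) *ᵥ u i) ⬝ᵥ ((S * A) *ᵥ u i) := by
          rw [← aux_sqrt_dot H S hs hvm, mulVec_mulVec]
        have e3 : (S * A)ᵀ * (S * A) = Aᵀ * H * A := by
          rw [transpose_mul, ht, Matrix.mul_assoc, ← Matrix.mul_assoc S S A, hs,
            ← Matrix.mul_assoc]
        calc (A *ᵥ u i) ⬝ᵥ H *ᵥ (A *ᵥ u i)
            = ((S * A) *ᵥ u i) ⬝ᵥ ((S * A) *ᵥ u i) := e1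
          _ ≤ ((S * A)ᵀ * (S * A)).trace * (u i ⬝ᵥ u i) := aux_cs _ _
          _ = (Aᵀ * H * A).trace := by rw [e3, huu i, mul_one]
      have h3 : Real.sqrt ((Aᵀ * H * A).trace) ≤ β * t := by
        have h5 := hsmooth (x + t • u i) x
        rw [← hAdef, add_sub_cancel_left] at h5
        have e4 : (t • u i) ⬝ᵥ (t • u i) = t ^ 2 := by
          rw [smul_dotProduct, dotProduct_smul, huu i]
          simp [sq, smul_eq_mul]
        rw [e4, Real.sqrt_sq htI.1] at h5
        exact h5
      have h4 : ‖g' t‖ ≤ Real.sqrt ((Aᵀ * H * A).trace) :=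
        Real.le_sqrt_of_sq_le (by rw [h1]; exact h2)
      calc ‖g' t‖ ≤ Real.sqrt ((Aᵀ * H * A).trace) := h4
        _ ≤ β * t := h3
        _ ≤ β * τ := by nlinarith [htI.2]
    -- mean value inequality on [0, τ]
    have hmv := norm_image_sub_le_of_norm_deriv_le_segment'
      (f := g) (f' := g') (a := 0) (b := τ)
      (fun t _ => (hderiv t).hasDerivWithinAt) hbound τ (Set.right_mem_Icc.2 hτ.le)
    have hg0 : g 0 = L (h x) := by simp [hg]
    have hgτ : g τ = L (h (x + τ • u i)) - τ • L d := rfl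
    have hrem : ‖L (h (x + τ • u i)) - τ • L d - L (h x)‖ ≤ β * τ ^ 2 := by
      have := hmv
      rw [hg0, hgτ, sub_zero] at this
      calc ‖L (h (x + τ • u i)) - τ • L d - L (h x)‖ ≤ β * τ * τ := this
        _ = β * τ ^ 2 := by ring
    -- triangle inequality and squaring
    have htri : ‖τ • L d‖ ≤ ‖L (h (x + τ • u i))‖ + ‖L (h x)‖ + β * τ ^ 2 := by
      have : τ • L d = L (h (x + τ • u i)) - L (h x) -
          (L (h (x + τ • u i)) - τ • L d - L (h x)) := by abel
      rw [this]
      calc ‖L (h (x + τ • u i)) - L (h x) - (L (h (x + τ • u i)) - τ • L d - L (h x))‖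
          ≤ ‖L (h (x + τ • u i)) - L (h x)‖ + ‖L (h (x + τ • u i)) - τ • L d - L (h x)‖ :=
            norm_sub_le _ _
        _ ≤ (‖L (h (x + τ • u i))‖ + ‖L (h x)‖) + (β * τ ^ 2) := by
            exact add_le_add (norm_sub_le _ _) hrem
    have hsq : ‖τ • L d‖ ^ 2 = τ ^ 2 * (d ⬝ᵥ H *ᵥ d) := by
      rw [norm_smul, mul_pow, hLnorm]
      simp [Real.norm_eq_abs, sq_abs]
    have ha := hLnorm (h (x + τ • u i))
    have hb := hLnorm (h x)
    have h5 : ‖τ • L d‖ ^ 2 ≤ (‖L (h (x + τ • u i))‖ + ‖L (h x)‖ + β * τ ^ 2) ^ 2 :=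
      pow_le_pow_left₀ (norm_nonneg _) htri 2
    have hna : 0 ≤ ‖L (h (x + τ • u i))‖ := norm_nonneg _
    have hnb : 0 ≤ ‖L (h x)‖ := norm_nonneg _
    nlinarith [sq_nonneg (‖L (h (x + τ • u i))‖ - ‖L (h x)‖),
      sq_nonneg (‖L (h (x + τ • u i))‖ - β * τ ^ 2),
      sq_nonneg (‖L (h x)‖ - β * τ ^ 2), h5, hsq, ha, hb]
  -- assemble
  refine ⟨fun i => x + τ • u i, ?_, ?_⟩
  · intro i
    have e1 : (x - (x + τ • u i)) ⬝ᵥ (x - (x + τ • u i)) = τ ^ 2 := by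
      rw [sub_add_cancel_left, neg_dotProduct, dotProduct_neg, neg_neg,
        smul_dotProduct, dotProduct_smul, huu i]
      simp [sq, smul_eq_mul]
    rw [e1, Real.sqrt_sq hτ.le]
  · have htr : ((Dh x)ᵀ * H * Dh x).trace =
        ∑ i, ((Dh x) *ᵥ u i) ⬝ᵥ H *ᵥ ((Dh x) *ᵥ u i) := by
      simpa [hu] using aux_trace_cols H (Dh x)
    rw [htr, Finset.mul_sum]
    calc ∑ i, τ ^ 2 * (((Dh x) *ᵥ u i) ⬝ᵥ H *ᵥ ((Dh x) *ᵥ u i))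
        ≤ ∑ i : Fin n, 3 * (h (x + τ • u i) ⬝ᵥ H *ᵥ (h (x + τ • u i)) +
            h x ⬝ᵥ H *ᵥ (h x) + τ ^ 4 * β ^ 2) :=
          Finset.sum_le_sum fun i _ => key i
      _ = 3 * ((∑ i, h (x + τ • u i) ⬝ᵥ H *ᵥ (h (x + τ • u i))) +
            n * (h x ⬝ᵥ H *ᵥ (h x)) + n * τ ^ 4 * β ^ 2) := by
          rw [← Finset.mul_sum]
          congr 1
          rw [Finset.sum_add_distrib, Finset.sum_add_distrib, Finset.sum_const,
            Finset.sum_const]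
          simp [Finset.card_univ, nsmul_eq_mul]
          ring
      _ = 3 * ((∑ i, h (x + τ • u i) ⬝ᵥ H.mulVec (h (x + τ • u i))) +
            n * (h x ⬝ᵥ H.mulVec (h x)) + n * τ ^ 4 * β ^ 2) := rfl
end

section
/- Let f_T : R^n -> R^d and f_S : R^n -> R^m, let H_T (d x d) and H_S (m x m) be positive semidefinite, and let D be a distribution on R^n. Suppose g~_{S,T} : R^d -> R^m, given by g~_{S,T}(w) = W w + b with W in R^{m x d} of full column rank (d < m), minimizes ||f_S - g∘f_T||_{D,H_S} over affine g. Then min over affine maps g' : R^m -> R^d of ||f_T - g'∘f_S||_{D,H_T} satisfies: min_{g'} ||f_T - g'∘f_S||_{D,H_T} <= sqrt( ||(W^T W)^{-1}||_F * ||H_T||_F ) * ||f_S - g~_{S,T}∘f_T||_{D}, where ||h||_{D,H}^2 = E_{x~D} h(x)^T H h(x) and ||h||_D^2 = E_{x~D}||h(x)||_2^2. -/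
open MeasureTheory Matrix

lemma my_dot_self_nonneg {k : ℕ} (u : Fin k → ℝ) : 0 ≤ u ⬝ᵥ u :=
  Finset.sum_nonneg fun i _ => mul_self_nonneg _

lemma my_cs {k : ℕ} (u w : Fin k → ℝ) :
    u ⬝ᵥ w ≤ Real.sqrt (u ⬝ᵥ u) * Real.sqrt (w ⬝ᵥ w) := by
  have := Real.sum_mul_le_sqrt_mul_sqrt Finset.univ u w
  simpa [dotProduct, sq] using this

lemma my_frob {a b : ℕ} (M : Matrix (Fin a) (Fin b) ℝ) (v : Fin b → ℝ) :
    (M.mulVec v) ⬝ᵥ (M.mulVec v) ≤ (∑ i, ∑ j, (M i j) ^ 2) * (v ⬝ᵥ v) := by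
  rw [dotProduct, Finset.sum_mul]
  apply Finset.sum_le_sum
  intro i _
  have h := Finset.sum_mul_sq_le_sq_mul_sq Finset.univ (fun j => M i j) v
  calc M.mulVec v i * M.mulVec v i = (∑ j, M i j * v j) ^ 2 := by
        simp [Matrix.mulVec, dotProduct, sq]
    _ ≤ (∑ j, (M i j) ^ 2) * ∑ j, (v j) ^ 2 := h
    _ = (∑ j, (M i j) ^ 2) * (v ⬝ᵥ v) := by simp [dotProduct, sq]

lemma my_quad {k : ℕ} (M : Matrix (Fin k) (Fin k) ℝ) (u : Fin k → ℝ) :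
    u ⬝ᵥ M.mulVec u ≤ Real.sqrt (∑ i, ∑ j, (M i j) ^ 2) * (u ⬝ᵥ u) := by
  have h1 := my_cs u (M.mulVec u)
  have h2 : Real.sqrt ((M.mulVec u) ⬝ᵥ (M.mulVec u)) ≤
      Real.sqrt ((∑ i, ∑ j, (M i j) ^ 2) * (u ⬝ᵥ u)) :=
    Real.sqrt_le_sqrt (my_frob M u)
  have hF : 0 ≤ ∑ i, ∑ j, (M i j) ^ 2 :=
    Finset.sum_nonneg fun i _ => Finset.sum_nonneg fun j _ => sq_nonneg _
  calc u ⬝ᵥ M.mulVec u ≤ Real.sqrt (u ⬝ᵥ u) * Real.sqrt ((M.mulVec u) ⬝ᵥ (M.mulVec u)) := h1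
    _ ≤ Real.sqrt (u ⬝ᵥ u) * Real.sqrt ((∑ i, ∑ j, (M i j) ^ 2) * (u ⬝ᵥ u)) := by
        exact mul_le_mul_of_nonneg_left h2 (Real.sqrt_nonneg _)
    _ = Real.sqrt (∑ i, ∑ j, (M i j) ^ 2) * (u ⬝ᵥ u) := by
        rw [Real.sqrt_mul hF, ← mul_assoc, mul_comm (Real.sqrt (u ⬝ᵥ u)),
          mul_assoc, Real.mul_self_sqrt (my_dot_self_nonneg u)]

lemma my_isUnit {k : ℕ} (M : Matrix (Fin k) (Fin k) ℝ) (h : M.rank = k) : IsUnit M := by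
  rw [Matrix.rank] at h
  have htop : LinearMap.range M.mulVecLin = ⊤ := by
    apply Submodule.eq_top_of_finrank_eq
    simpa using h
  exact Matrix.mulVec_surjective_iff_isUnit.mp
    (LinearMap.range_eq_top.mp htop)

lemma my_key {d m : ℕ} (W : Matrix (Fin m) (Fin d) ℝ) (B : Matrix (Fin d) (Fin d) ℝ)
    (hBs : Bᵀ = B) (hMB : (Wᵀ * W) * B = 1) (v : Fin m → ℝ) :
    ((B * Wᵀ).mulVec v) ⬝ᵥ ((B * Wᵀ).mulVec v) ≤
      Real.sqrt (∑ i, ∑ j, (B i j) ^ 2) * (v ⬝ᵥ v) := by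
  set u := (B * Wᵀ).mulVec v with hu
  set FB := Real.sqrt (∑ i, ∑ j, (B i j) ^ 2) with hFB
  have hFBnn : 0 ≤ FB := Real.sqrt_nonneg _
  have e : ∀ x : Fin m → ℝ, ((W * B).mulVec u) ⬝ᵥ x = u ⬝ᵥ ((B * Wᵀ).mulVec x) := by
    intro x
    rw [← Matrix.vecMul_transpose, Matrix.dotProduct_mulVec, Matrix.transpose_mul, hBs]
  have step1 : u ⬝ᵥ u = ((W * B).mulVec u) ⬝ᵥ v := by rw [e v, ← hu]
  have step3 : ((W * B).mulVec u) ⬝ᵥ ((W * B).mulVec u) = u ⬝ᵥ B.mulVec u := by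
    rw [e ((W * B).mulVec u), Matrix.mulVec_mulVec, ← Matrix.mul_assoc,
      Matrix.mul_assoc B Wᵀ W, Matrix.mul_assoc B (Wᵀ * W) B, hMB, Matrix.mul_one]
  have hquad : u ⬝ᵥ B.mulVec u ≤ FB * (u ⬝ᵥ u) := my_quad B u
  have ht : 0 ≤ u ⬝ᵥ u := my_dot_self_nonneg u
  have hFBt : 0 ≤ FB * (u ⬝ᵥ u) := mul_nonneg hFBnn ht
  have h2 : u ⬝ᵥ u ≤ Real.sqrt (FB * (u ⬝ᵥ u)) * Real.sqrt (v ⬝ᵥ v) := by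
    calc u ⬝ᵥ u = ((W * B).mulVec u) ⬝ᵥ v := step1
      _ ≤ Real.sqrt (((W * B).mulVec u) ⬝ᵥ ((W * B).mulVec u)) * Real.sqrt (v ⬝ᵥ v) := my_cs _ _
      _ ≤ Real.sqrt (FB * (u ⬝ᵥ u)) * Real.sqrt (v ⬝ᵥ v) := by
          apply mul_le_mul_of_nonneg_right _ (Real.sqrt_nonneg _)
          exact Real.sqrt_le_sqrt (step3 ▸ hquad)
  rcases eq_or_lt_of_le ht with h0 | h0
  · rw [← h0]; exact mul_nonneg hFBnn (my_dot_self_nonneg v)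
  · have hsq : (u ⬝ᵥ u) ^ 2 ≤ (FB * (u ⬝ᵥ u)) * (v ⬝ᵥ v) := by
      calc (u ⬝ᵥ u) ^ 2 = (u ⬝ᵥ u) * (u ⬝ᵥ u) := sq (u ⬝ᵥ u)
        _ ≤ (Real.sqrt (FB * (u ⬝ᵥ u)) * Real.sqrt (v ⬝ᵥ v)) *
            (Real.sqrt (FB * (u ⬝ᵥ u)) * Real.sqrt (v ⬝ᵥ v)) :=
          mul_le_mul h2 h2 ht (by positivity)
        _ = (FB * (u ⬝ᵥ u)) * (v ⬝ᵥ v) := by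
          rw [mul_mul_mul_comm, Real.mul_self_sqrt hFBt,
            Real.mul_self_sqrt (my_dot_self_nonneg v)]
    nlinarith [hsq, h0]
/-- Theorem 6 (prop:5), case d < m: if g~_{S,T}(w) = W w + b (with W of full column
rank) minimizes ‖f_S - g∘f_T‖_{D,H_S} over affine g, then
min_{g'} ‖f_T - g'∘f_S‖_{D,H_T} ≤ sqrt(‖(WᵀW)⁻¹‖_F ‖H_T‖_F) · ‖f_S - g~_{S,T}∘f_T‖_D. -/
theorem stmt16 {n d m : ℕ} (hdm : d < m)
    (μ : Measure (Fin n → ℝ)) [IsProbabilityMeasure μ]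
    (fT : (Fin n → ℝ) → (Fin d → ℝ)) (fS : (Fin n → ℝ) → (Fin m → ℝ))
    (HT : Matrix (Fin d) (Fin d) ℝ) (hHT : HT.PosSemidef)
    (HS : Matrix (Fin m) (Fin m) ℝ) (hHS : HS.PosSemidef)
    (W : Matrix (Fin m) (Fin d) ℝ) (b : Fin m → ℝ) (hWrank : W.rank = d)
    (hIntS : ∀ (W' : Matrix (Fin m) (Fin d) ℝ) (b' : Fin m → ℝ),
      Integrable (fun x => (fS x - (W'.mulVec (fT x) + b')) ⬝ᵥ
        HS.mulVec (fS x - (W'.mulVec (fT x) + b'))) μ)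
    (hIntT : ∀ (W' : Matrix (Fin d) (Fin m) ℝ) (b' : Fin d → ℝ),
      Integrable (fun x => (fT x - (W'.mulVec (fS x) + b')) ⬝ᵥ
        HT.mulVec (fT x - (W'.mulVec (fS x) + b'))) μ)
    (hInt2 : Integrable (fun x => (fS x - (W.mulVec (fT x) + b)) ⬝ᵥ
        (fS x - (W.mulVec (fT x) + b))) μ)
    (hmin : ∀ (W' : Matrix (Fin m) (Fin d) ℝ) (b' : Fin m → ℝ),
      (∫ x, (fS x - (W.mulVec (fT x) + b)) ⬝ᵥ
          HS.mulVec (fS x - (W.mulVec (fT x) + b)) ∂μ) ≤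
        ∫ x, (fS x - (W'.mulVec (fT x) + b')) ⬝ᵥ
          HS.mulVec (fS x - (W'.mulVec (fT x) + b')) ∂μ) :
    (⨅ p : Matrix (Fin d) (Fin m) ℝ × (Fin d → ℝ),
        Real.sqrt (∫ x, (fT x - ((p.1).mulVec (fS x) + p.2)) ⬝ᵥ
          HT.mulVec (fT x - ((p.1).mulVec (fS x) + p.2)) ∂μ)) ≤
      Real.sqrt (Real.sqrt (∑ i, ∑ j, ((Wᵀ * W)⁻¹ i j) ^ 2) *
          Real.sqrt (∑ i, ∑ j, (HT i j) ^ 2)) *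
        Real.sqrt (∫ x, (fS x - (W.mulVec (fT x) + b)) ⬝ᵥ
          (fS x - (W.mulVec (fT x) + b)) ∂μ) := by
  set v : (Fin n → ℝ) → (Fin m → ℝ) := fun x => fS x - (W.mulVec (fT x) + b) with hv
  have hMrank : (Wᵀ * W).rank = d := by
    rw [Matrix.rank_transpose_mul_self, hWrank]
  have hMunit : IsUnit (Wᵀ * W) := my_isUnit _ hMrank
  have hdet : IsUnit (Wᵀ * W).det := (Matrix.isUnit_iff_isUnit_det _).mp hMunit
  set B := (Wᵀ * W)⁻¹ with hB
  have hMB : (Wᵀ * W) * B = 1 := Matrix.mul_nonsing_inv _ hdet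
  have hBs : Bᵀ = B := by
    rw [hB, Matrix.transpose_nonsing_inv]
    congr 1
    rw [Matrix.transpose_mul, Matrix.transpose_transpose]
  set A := B * Wᵀ with hA
  set c' : Fin d → ℝ := -(A.mulVec b) with hc'
  have hAW : A * W = 1 := by
    rw [hA, Matrix.mul_assoc]
    exact Matrix.nonsing_inv_mul _ hdet
  refine le_trans (ciInf_le (f := fun p : Matrix (Fin d) (Fin m) ℝ × (Fin d → ℝ) =>
      Real.sqrt (∫ x, (fT x - ((p.1).mulVec (fS x) + p.2)) ⬝ᵥ
        HT.mulVec (fT x - ((p.1).mulVec (fS x) + p.2)) ∂μ))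
      ⟨0, by rintro y ⟨p, rfl⟩; exact Real.sqrt_nonneg _⟩ (A, c')) ?_
  simp only
  have hpt : ∀ x, fT x - (A.mulVec (fS x) + c') = -(A.mulVec (v x)) := by
    intro x
    have h1 : A.mulVec (v x) = A.mulVec (fS x) - fT x - A.mulVec b := by
      rw [hv]
      simp only [Matrix.mulVec_sub, Matrix.mulVec_add, Matrix.mulVec_mulVec, hAW,
        Matrix.one_mulVec, sub_add_eq_sub_sub]
    rw [h1, hc']
    funext i
    simp only [Pi.sub_apply, Pi.add_apply, Pi.neg_apply]
    ring
  have hinteq : ∀ x, (fT x - (A.mulVec (fS x) + c')) ⬝ᵥ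
      HT.mulVec (fT x - (A.mulVec (fS x) + c')) =
      (A.mulVec (v x)) ⬝ᵥ HT.mulVec (A.mulVec (v x)) := by
    intro x
    rw [hpt x, Matrix.mulVec_neg, neg_dotProduct, dotProduct_neg, neg_neg]
  set FB := Real.sqrt (∑ i, ∑ j, (B i j) ^ 2) with hFB
  set FHT := Real.sqrt (∑ i, ∑ j, (HT i j) ^ 2) with hFHT
  have hFBnn : 0 ≤ FB := Real.sqrt_nonneg _
  have hFHTnn : 0 ≤ FHT := Real.sqrt_nonneg _
  have hb : ∀ x, (A.mulVec (v x)) ⬝ᵥ HT.mulVec (A.mulVec (v x)) ≤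
      (FB * FHT) * (v x ⬝ᵥ v x) := by
    intro x
    calc (A.mulVec (v x)) ⬝ᵥ HT.mulVec (A.mulVec (v x))
        ≤ FHT * ((A.mulVec (v x)) ⬝ᵥ (A.mulVec (v x))) := my_quad HT _
      _ ≤ FHT * (FB * (v x ⬝ᵥ v x)) :=
          mul_le_mul_of_nonneg_left (my_key W B hBs hMB (v x)) hFHTnn
      _ = (FB * FHT) * (v x ⬝ᵥ v x) := by ring
  have hintle : (∫ x, (fT x - (A.mulVec (fS x) + c')) ⬝ᵥ
      HT.mulVec (fT x - (A.mulVec (fS x) + c')) ∂μ) ≤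
      (FB * FHT) * ∫ x, (v x) ⬝ᵥ (v x) ∂μ := by
    rw [← integral_const_mul]
    refine integral_mono (hIntT A c') (Integrable.const_mul ?_ _) ?_
    · exact hInt2
    · intro x
      dsimp only
      rw [hinteq x]
      exact hb x
  calc Real.sqrt (∫ x, (fT x - (A.mulVec (fS x) + c')) ⬝ᵥ
        HT.mulVec (fT x - (A.mulVec (fS x) + c')) ∂μ)
      ≤ Real.sqrt ((FB * FHT) * ∫ x, (v x) ⬝ᵥ (v x) ∂μ) := Real.sqrt_le_sqrt hintle
    _ = Real.sqrt (FB * FHT) * Real.sqrt (∫ x, (v x) ⬝ᵥ (v x) ∂μ) :=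
        Real.sqrt_mul (mul_nonneg hFBnn hFHTnn) _
end
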